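/- Let s ≥ 1, let m₁,…,m_s be positive integers with m₁ + ⋯ + m_s = m, let λ₁ > λ₂ > ⋯ > λ_s be real numbers, and let J_R = diag[J_{m₁}(λ₁),…,J_{m_s}(λ_s)] ∈ M_m(ℝ) be the block-diagonal matrix of the corresponding Jordan blocks. For Q ∈ M_m(ℝ), write Q in blocks Q_{ij} of size m_i × m_j corresponding to this block structure. Then the matrix function L(t) = exp(−J_R t)·Q·exp(J_R t), t ≥ 0, is regular on [0,∞) if and only if Q_{ij} = 0 for all i > j, and for each i the diagonal block Q_{ii} is invertible and commutes with J_{m_i}(λ_i) (i.e., J_{m_i}(λ_i)Q_{ii} = Q_{ii}J_{m_i}(λ_i)). -/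

import Mathlib

open Matrix Set NormedSpace

attribute [local instance] Matrix.frobeniusNormedAddCommGroup Matrix.frobeniusNormedSpace

/-- The Jordan block `J_p(λ) = λE + H`, with `λ` on the diagonal and `1` on the first
superdiagonal. -/
def jordanBlock (p : ℕ) (l : ℝ) : Matrix (Fin p) (Fin p) ℝ :=
  Matrix.of fun i j => if j = i then l else if (j : ℕ) = (i : ℕ) + 1 then 1 else 0

/-- A matrix-valued function is *regular on `[0,∞)`* : it is `C¹`, has bounded norm,
and `|det L(t)|` is bounded away from zero. -/
def RegularOn {ι : Type*} [Fintype ι] [DecidableEq ι] (L : ℝ → Matrix ι ι ℝ) : Prop :=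
  ContDiffOn ℝ 1 L (Ici (0:ℝ)) ∧ (∃ M : ℝ, ∀ t ∈ Ici (0:ℝ), ‖L t‖ ≤ M) ∧
    (∃ η > (0:ℝ), ∀ t ∈ Ici (0:ℝ), η ≤ |(L t).det|)

namespace Stmt8Aux

open Finset Filter Polynomial

attribute [local instance] Matrix.frobeniusNormedRing Matrix.frobeniusNormedAlgebra

/-! ### The nilpotent part of a Jordan block -/

lemma jordanBlock_eq (p : ℕ) (l : ℝ) :
    jordanBlock p l = l • (1 : Matrix (Fin p) (Fin p) ℝ) + jordanBlock p 0 := by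
  ext i j
  by_cases h : j = i
  · subst h; simp [jordanBlock, Matrix.one_apply]
  · simp [jordanBlock, Matrix.one_apply, h, Ne.symm h]

lemma pow_nilp_apply {p : ℕ} : ∀ (k : ℕ) (a b : Fin p), (b:ℕ) < (a:ℕ) + k →
    ((jordanBlock p 0)^k) a b = 0 := by
  intro k
  induction k with
  | zero =>
    intro a b h
    rw [pow_zero]
    refine Matrix.one_apply_ne (fun e => ?_)
    subst e; omega
  | succ k ih =>
    intro a b h
    rw [pow_succ, Matrix.mul_apply]
    apply Finset.sum_eq_zero
    intro c _
    by_cases hc : (b:ℕ) = (c:ℕ) + 1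
    · rw [ih a c (by omega), zero_mul]
    · have : jordanBlock p 0 c b = 0 := by
        simp only [jordanBlock, Matrix.of_apply]
        split_ifs <;> tauto
      rw [this, mul_zero]

lemma nilp_pow_self (p : ℕ) : (jordanBlock p 0)^p = 0 := by
  ext a b
  rw [pow_nilp_apply p a b (lt_of_lt_of_le b.isLt (Nat.le_add_left p a))]
  rfl

/-- The truncated exponential series of the nilpotent part. -/
noncomputable def S (p : ℕ) (t : ℝ) : Matrix (Fin p) (Fin p) ℝ :=
  ∑ k ∈ range p, (t^k / k.factorial) • (jordanBlock p 0)^k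

lemma exp_nilp (p : ℕ) (t : ℝ) : exp (t • jordanBlock p 0) = S p t := by
  simp only [NormedSpace.exp_eq_tsum (𝕂 := ℝ)]
  rw [tsum_eq_sum (s := range p) ?h]
  · apply Finset.sum_congr rfl
    intro k _
    rw [_root_.smul_pow, smul_smul]
    congr 1
    rw [div_eq_mul_inv, mul_comm]
  · intro n hn
    rw [Finset.mem_range, not_lt] at hn
    have : (jordanBlock p 0)^n = 0 := by
      rw [← Nat.add_sub_cancel' hn, pow_add, nilp_pow_self, zero_mul]
    rw [_root_.smul_pow, this, smul_zero, smul_zero]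

lemma exp_jordan (p : ℕ) (l : ℝ) (t : ℝ) :
    exp (t • jordanBlock p l) = Real.exp (t*l) • S p t := by
  rw [jordanBlock_eq, smul_add, smul_smul]
  rw [Matrix.exp_add_of_commute _ _ (((Commute.one_left _).smul_left _).smul_right _)]
  have h1 : exp ((t*l) • (1 : Matrix (Fin p) (Fin p) ℝ)) = Real.exp (t*l) • 1 := by
    rw [← Algebra.algebraMap_eq_smul_one, ← Algebra.algebraMap_eq_smul_one, Real.exp_eq_exp_ℝ]
    exact (algebraMap_exp_comm (t*l)).symm
  rw [exp_nilp, h1, smul_mul_assoc, one_mul]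

lemma S_zero (p : ℕ) : S p 0 = 1 := by
  rw [S, Finset.sum_eq_single 0]
  · simp
  · intro k _ hk0; rw [zero_pow hk0, zero_div, zero_smul]
  · intro h
    ext a b
    exact absurd a.isLt (by simp only [Finset.mem_range, not_lt, Nat.le_zero] at h; omega)

/-! ### Entry formulas for block products -/

variable {s : ℕ} {msz : Fin s → ℕ} {lam : Fin s → ℝ}

lemma bd_mul_apply (M : ∀ i, Matrix (Fin (msz i)) (Fin (msz i)) ℝ)
    (P : Matrix (Σ i, Fin (msz i)) (Σ i, Fin (msz i)) ℝ) (i : Fin s) (a : Fin (msz i))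
    (y : Σ i, Fin (msz i)) :
    (blockDiagonal' M * P) ⟨i, a⟩ y = ∑ c, M i a c * P ⟨i, c⟩ y := by
  rw [Matrix.mul_apply, ← Finset.univ_sigma_univ, Finset.sum_sigma]
  rw [Finset.sum_eq_single i]
  · apply Finset.sum_congr rfl; intro c _; rw [Matrix.blockDiagonal'_apply_eq]
  · intro i' _ hne
    apply Finset.sum_eq_zero; intro a' _
    rw [Matrix.blockDiagonal'_apply_ne _ _ _ (Ne.symm hne), zero_mul]
  · intro h; exact absurd (Finset.mem_univ i) h

lemma mul_bd_apply (N : ∀ i, Matrix (Fin (msz i)) (Fin (msz i)) ℝ)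
    (P : Matrix (Σ i, Fin (msz i)) (Σ i, Fin (msz i)) ℝ) (j : Fin s) (b : Fin (msz j))
    (x : Σ i, Fin (msz i)) :
    (P * blockDiagonal' N) x ⟨j, b⟩ = ∑ c, P x ⟨j, c⟩ * N j c b := by
  rw [Matrix.mul_apply, ← Finset.univ_sigma_univ, Finset.sum_sigma]
  rw [Finset.sum_eq_single j]
  · apply Finset.sum_congr rfl; intro c _; rw [Matrix.blockDiagonal'_apply_eq]
  · intro j' _ hne
    apply Finset.sum_eq_zero; intro a' _
    rw [Matrix.blockDiagonal'_apply_ne _ _ _ hne, mul_zero]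
  · intro h; exact absurd (Finset.mem_univ j) h

lemma bd_mul_bd_apply (M N : ∀ i, Matrix (Fin (msz i)) (Fin (msz i)) ℝ)
    (P : Matrix (Σ i, Fin (msz i)) (Σ i, Fin (msz i)) ℝ) (x y : Σ i, Fin (msz i)) :
    (blockDiagonal' M * P * blockDiagonal' N) x y
      = (M x.1 * (Matrix.of fun a b => P ⟨x.1, a⟩ ⟨y.1, b⟩) * N y.1) x.2 y.2 := by
  obtain ⟨i, a⟩ := x; obtain ⟨j, b⟩ := y
  rw [mul_bd_apply]
  simp only [bd_mul_apply]
  simp [Matrix.mul_apply, Finset.sum_mul]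

lemma exp_neg_mul_exp {n : Type*} [Fintype n] [DecidableEq n] (J : Matrix n n ℝ) (t : ℝ) :
    exp ((-t) • J) * exp (t • J) = 1 := by
  rw [← Matrix.exp_add_of_commute _ _ (((Commute.refl J).smul_right t).smul_left (-t)),
    ← add_smul, neg_add_cancel, zero_smul, NormedSpace.exp_zero]

lemma exp_mul_exp_neg {n : Type*} [Fintype n] [DecidableEq n] (J : Matrix n n ℝ) (t : ℝ) :
    exp (t • J) * exp ((-t) • J) = 1 := by
  rw [← Matrix.exp_add_of_commute _ _ (((Commute.refl J).smul_right (-t)).smul_left t),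
    ← add_smul, add_neg_cancel, zero_smul, NormedSpace.exp_zero]

lemma exp_conj_of_commute {n : Type*} [Fintype n] [DecidableEq n] (J B : Matrix n n ℝ)
    (h : Commute J B) (t : ℝ) : exp ((-t) • J) * B * exp (t • J) = B := by
  have h1 : Commute (exp ((-t) • J)) B := (h.smul_left (-t)).exp_left
  rw [h1.eq, mul_assoc, exp_neg_mul_exp, mul_one]

lemma entry_raw (Q : Matrix (Σ i, Fin (msz i)) (Σ i, Fin (msz i)) ℝ) (t : ℝ)
    (x y : Σ i, Fin (msz i)) :
    (exp ((-t) • blockDiagonal' fun i => jordanBlock (msz i) (lam i)) * Q *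
        exp (t • blockDiagonal' fun i => jordanBlock (msz i) (lam i))) x y
      = (exp ((-t) • jordanBlock (msz x.1) (lam x.1)) *
          (Matrix.of fun a b => Q ⟨x.1, a⟩ ⟨y.1, b⟩) *
          exp (t • jordanBlock (msz y.1) (lam y.1))) x.2 y.2 := by
  have h1 : ∀ u : ℝ, exp (u • blockDiagonal' fun i => jordanBlock (msz i) (lam i))
      = blockDiagonal' (fun i => exp (u • jordanBlock (msz i) (lam i))) := by
    intro u
    rw [← Matrix.blockDiagonal'_smul, Matrix.exp_blockDiagonal']
    have h2 : (exp (u • fun i => jordanBlock (msz i) (lam i)) :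
        ∀ i, Matrix (Fin (msz i)) (Fin (msz i)) ℝ)
        = fun i => exp (u • jordanBlock (msz i) (lam i)) := by
      funext i
      refine (Pi.coe_exp _ _).trans ?_
      rfl
    rw [h2]
  rw [h1, h1, bd_mul_bd_apply]

lemma entry_S (Q : Matrix (Σ i, Fin (msz i)) (Σ i, Fin (msz i)) ℝ) (t : ℝ)
    (x y : Σ i, Fin (msz i)) :
    (exp ((-t) • blockDiagonal' fun i => jordanBlock (msz i) (lam i)) * Q *
        exp (t • blockDiagonal' fun i => jordanBlock (msz i) (lam i))) x y
      = Real.exp ((lam y.1 - lam x.1) * t) *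
        ((S (msz x.1) (-t) * (Matrix.of fun a b => Q ⟨x.1, a⟩ ⟨y.1, b⟩) * S (msz y.1) t)
          x.2 y.2) := by
  rw [entry_raw, exp_jordan, exp_jordan, Matrix.smul_mul, Matrix.smul_mul, Matrix.mul_smul,
    smul_smul, Matrix.smul_apply, smul_eq_mul, ← Real.exp_add,
    show -t * lam x.1 + t * lam y.1 = (lam y.1 - lam x.1) * t by ring]

/-! ### Polynomial representation -/

lemma poly_rep {p q : ℕ} (B : Matrix (Fin p) (Fin q) ℝ) (a : Fin p) (b : Fin q) :
    ∃ r : ℝ[X], ∀ t : ℝ, (S p (-t) * B * S q t) a b = r.eval t := by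
  refine ⟨∑ k ∈ range p, ∑ l ∈ range q,
    Polynomial.C ((-1)^k * ((jordanBlock p 0)^k * B * (jordanBlock q 0)^l) a b /
      (k.factorial * l.factorial)) * X^(k+l), ?_⟩
  intro t
  simp only [S]
  simp only [Matrix.sum_mul, Matrix.mul_sum, Matrix.smul_mul, Matrix.mul_smul, smul_smul,
    Matrix.sum_apply, Matrix.smul_apply, smul_eq_mul, eval_finset_sum, eval_mul, eval_pow,
    eval_C, eval_X, Finset.mul_sum]
  rw [Finset.sum_comm]
  apply Finset.sum_congr rfl; intro k _
  apply Finset.sum_congr rfl; intro l _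
  rw [neg_pow, pow_add]
  ring

/-! ### Analysis lemmas -/

lemma poly_tendsto_zero {r : ℝ[X]} (h : Tendsto (fun t => r.eval t) atTop (nhds 0)) :
    r = 0 := by
  by_contra hr
  rcases lt_or_ge 0 r.degree with hd | hd
  · have h2 : ∀ᶠ t in atTop, 1 ≤ |r.eval t| :=
      (Polynomial.abs_tendsto_atTop r hd).eventually_ge_atTop 1
    have h3 : ∀ᶠ t in atTop, |r.eval t| < 1 := by
      have := h.abs
      rw [abs_zero] at this
      exact this.eventually_lt_const one_pos
    obtain ⟨t, ht1, ht2⟩ := (h2.and h3).exists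
    linarith
  · have hC := Polynomial.eq_C_of_degree_le_zero hd
    rw [hC] at h
    simp only [eval_C] at h
    have hc0 : r.coeff 0 = 0 := tendsto_nhds_unique tendsto_const_nhds h
    exact hr (by rw [hC, hc0, map_zero])

lemma poly_bounded_const {r : ℝ[X]} {M : ℝ} (h : ∀ t : ℝ, 0 ≤ t → |r.eval t| ≤ M) (t : ℝ) :
    r.eval t = r.eval 0 := by
  rcases lt_or_ge 0 r.degree with hd | hd
  · exfalso
    obtain ⟨u, hu1, hu2⟩ :=
      (((Polynomial.abs_tendsto_atTop r hd).eventually_ge_atTop (M+1)).and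
        (Filter.eventually_ge_atTop (0:ℝ))).exists
    have := h u hu2
    linarith
  · have hC := Polynomial.eq_C_of_degree_le_zero hd
    rw [hC]
    simp

lemma exp_growth_zero {c : ℝ} (hc : 0 < c) {r : ℝ[X]} {M : ℝ}
    (h : ∀ t : ℝ, 0 ≤ t → |Real.exp (c*t) * r.eval t| ≤ M) : r = 0 := by
  apply poly_tendsto_zero
  have hg : Tendsto (fun t : ℝ => M * Real.exp (-(c*t))) atTop (nhds 0) := by
    have h2 : Tendsto (fun t : ℝ => -(c*t)) atTop atBot :=
      Filter.tendsto_neg_atBot_iff.mpr (tendsto_id.const_mul_atTop hc)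
    have h3 := Real.tendsto_exp_atBot.comp h2
    simpa using tendsto_const_nhds.mul h3
  apply squeeze_zero_norm' ?_ hg
  filter_upwards [Filter.eventually_ge_atTop (0:ℝ)] with t ht
  have h1 := h t ht
  rw [abs_mul, abs_of_pos (Real.exp_pos _)] at h1
  rw [Real.norm_eq_abs, Real.exp_neg, ← div_eq_mul_inv, le_div_iff₀ (Real.exp_pos _),
    mul_comm]
  exact h1

lemma bounded_of_tendsto {f : ℝ → ℝ} (hf : Continuous f) (h : Tendsto f atTop (nhds 0)) :
    ∃ M, ∀ t : ℝ, 0 ≤ t → |f t| ≤ M := by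
  have h1 : ∀ᶠ t in atTop, |f t| < 1 := by
    have := h.abs; rw [abs_zero] at this; exact this.eventually_lt_const one_pos
  obtain ⟨T, hT⟩ := h1.exists_forall_of_atTop
  obtain ⟨C, hC⟩ := (isCompact_Icc (a := (0:ℝ)) (b := T)).exists_bound_of_continuousOn
    hf.continuousOn
  refine ⟨max C 1, fun t ht => ?_⟩
  rcases le_total t T with h' | h'
  · exact le_trans (by simpa [Real.norm_eq_abs] using hC t ⟨ht, h'⟩) (le_max_left _ _)
  · exact le_trans (hT t h').le (le_max_right _ _)

lemma exp_decay_mul_poly_bounded {c : ℝ} (hc : c < 0) (r : ℝ[X]) :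
    ∃ M, ∀ t : ℝ, 0 ≤ t → |Real.exp (c*t) * r.eval t| ≤ M := by
  have hc' : (0:ℝ) < -c := by linarith
  set r' := r.comp (Polynomial.C (-c)⁻¹ * X) with hr'
  have key : (fun t : ℝ => Real.exp (c*t) * r.eval t)
      = (fun u : ℝ => r'.eval u / Real.exp u) ∘ (fun t : ℝ => -c * t) := by
    funext t
    simp only [Function.comp_apply, hr', eval_comp, eval_mul, eval_C, eval_X]
    have h1 : (-c)⁻¹ * (-c * t) = t := by
      rw [← mul_assoc, inv_mul_cancel₀ (by linarith : -c ≠ 0), one_mul]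
    rw [h1, show c * t = -(-c * t) by ring, Real.exp_neg, div_eq_mul_inv, mul_comm]
  have htend : Tendsto (fun t : ℝ => Real.exp (c*t) * r.eval t) atTop (nhds 0) := by
    rw [key]
    exact (Polynomial.tendsto_div_exp_atTop r').comp (tendsto_id.const_mul_atTop hc')
  exact bounded_of_tendsto
    ((Real.continuous_exp.comp (continuous_const.mul continuous_id)).mul r.continuous) htend

/-! ### Frobenius norm entry bounds -/

lemma frob_entry_le {ι : Type*} [Fintype ι] (A : Matrix ι ι ℝ) (x y : ι) : |A x y| ≤ ‖A‖ := by
  rw [Matrix.frobenius_norm_def]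
  simp only [show (2:ℝ) = ((2:ℕ):ℝ) by norm_num, Real.rpow_natCast]
  have h0 : |A x y| = (|A x y|^(2:ℕ)) ^ ((1:ℝ)/2) := by
    rw [← Real.rpow_natCast (|A x y|) 2, ← Real.rpow_mul (abs_nonneg _)]
    norm_num
  rw [h0]
  apply Real.rpow_le_rpow (by positivity) ?_ (by norm_num)
  calc |A x y|^(2:ℕ) = ‖A x y‖^(2:ℕ) := by rw [Real.norm_eq_abs]
    _ ≤ ∑ j, ‖A x j‖^(2:ℕ) :=
        Finset.single_le_sum (f := fun j => ‖A x j‖^(2:ℕ)) (fun j _ => by positivity)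
          (Finset.mem_univ y)
    _ ≤ ∑ i, ∑ j, ‖A i j‖^(2:ℕ) := Finset.single_le_sum
        (f := fun i => ∑ j, ‖A i j‖^(2:ℕ)) (fun i _ => by positivity) (Finset.mem_univ x)

lemma norm_le_of_entries {ι : Type*} [Fintype ι] (A : Matrix ι ι ℝ) (B : ι → ι → ℝ)
    (h : ∀ x y, |A x y| ≤ B x y) : ‖A‖ ≤ (∑ x, ∑ y, (B x y)^(2:ℕ)) ^ ((1:ℝ)/2) := by
  rw [Matrix.frobenius_norm_def]
  simp only [show (2:ℝ) = ((2:ℕ):ℝ) by norm_num, Real.rpow_natCast]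
  apply Real.rpow_le_rpow (by positivity) ?_ (by norm_num)
  apply Finset.sum_le_sum; intro x _
  apply Finset.sum_le_sum; intro y _
  rw [Real.norm_eq_abs]
  exact pow_le_pow_left₀ (abs_nonneg _) (h x y) 2

/-! ### Differentiability -/

lemma continuous_expt {n : Type*} [Fintype n] [DecidableEq n] (A : Matrix n n ℝ) :
    Continuous fun t : ℝ => exp (t • A) :=
  Differentiable.continuous
    (fun t => (hasDerivAt_exp_smul_const (𝕂 := ℝ) A t).differentiableAt)

lemma contDiff_L {n : Type*} [Fintype n] [DecidableEq n] (A B Q : Matrix n n ℝ) :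
    ContDiff ℝ 1 (fun t : ℝ => exp (t • A) * Q * exp (t • B)) := by
  have hd : ∀ t : ℝ, HasDerivAt (fun t : ℝ => exp (t • A) * Q * exp (t • B))
      ((exp (t • A) * A * Q) * exp (t • B) +
        (exp (t • A) * Q) * (exp (t • B) * B)) t := by
    intro t
    have h1 := (hasDerivAt_exp_smul_const (𝕂 := ℝ) A t).mul_const Q
    have h2 := hasDerivAt_exp_smul_const (𝕂 := ℝ) B t
    exact h1.mul h2
  rw [contDiff_one_iff_deriv]
  refine ⟨fun t => (hd t).differentiableAt, ?_⟩
  have heq : deriv (fun t : ℝ => exp (t • A) * Q * exp (t • B)) = fun t =>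
      (exp (t • A) * A * Q) * exp (t • B) +
        (exp (t • A) * Q) * (exp (t • B) * B) :=
    funext fun t => (hd t).deriv
  erw [heq]
  exact ((((continuous_expt A).mul continuous_const).mul continuous_const).mul
      (continuous_expt B)).add
    (((continuous_expt A).mul continuous_const).mul
      ((continuous_expt B).mul continuous_const))

lemma commute_of_conj {n : Type*} [Fintype n] [DecidableEq n] {J B : Matrix n n ℝ}
    (h : ∀ t : ℝ, B * exp (t • J) = exp (t • J) * B) : J * B = B * J := by
  have hF : HasDerivAt (fun u : ℝ => B * exp (u • J))
      (B * (exp ((0:ℝ) • J) * J)) 0 :=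
    (hasDerivAt_exp_smul_const (𝕂 := ℝ) J (0:ℝ)).const_mul B
  have hG : HasDerivAt (fun u : ℝ => exp (u • J) * B)
      ((exp ((0:ℝ) • J) * J) * B) 0 :=
    (hasDerivAt_exp_smul_const (𝕂 := ℝ) J (0:ℝ)).mul_const B
  have heq : (fun u : ℝ => B * exp (u • J)) = fun u => exp (u • J) * B := funext h
  rw [heq] at hF
  have huniq := hF.unique hG
  rw [zero_smul, NormedSpace.exp_zero, one_mul] at huniq
  exact huniq.symm

/-- The equivalence between `Fin (msz k)` and the `k`-th block of the sigma type. -/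
def blockEquiv {s : ℕ} {msz : Fin s → ℕ} (k : Fin s) :
    Fin (msz k) ≃ {x : Σ i, Fin (msz i) // x.1 = k} where
  toFun a := ⟨⟨k, a⟩, rfl⟩
  invFun x := x.2 ▸ x.1.2
  left_inv a := rfl
  right_inv x := by rcases x with ⟨⟨i, a⟩, h⟩; subst h; rfl

end Stmt8Aux

open Stmt8Aux in
theorem stmt_8 (s : ℕ) (hs : 1 ≤ s) (msz : Fin s → ℕ) (hmsz : ∀ i, 1 ≤ msz i)
    (m : ℕ) (hm : ∑ i, msz i = m)
    (lam : Fin s → ℝ) (hlam : ∀ i j : Fin s, i < j → lam j < lam i)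
    (Q : Matrix (Σ i, Fin (msz i)) (Σ i, Fin (msz i)) ℝ) :
    (RegularOn fun t : ℝ =>
        exp ((-t) • blockDiagonal' fun i => jordanBlock (msz i) (lam i)) * Q *
          exp (t • blockDiagonal' fun i => jordanBlock (msz i) (lam i))) ↔
      ((∀ i j : Fin s, j < i → ∀ (a : Fin (msz i)) (b : Fin (msz j)), Q ⟨i, a⟩ ⟨j, b⟩ = 0) ∧
        ∀ i : Fin s,
          IsUnit (Matrix.of fun a b => Q ⟨i, a⟩ ⟨i, b⟩ : Matrix (Fin (msz i)) (Fin (msz i)) ℝ) ∧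
          jordanBlock (msz i) (lam i) * Matrix.of (fun a b => Q ⟨i, a⟩ ⟨i, b⟩)
            = Matrix.of (fun a b => Q ⟨i, a⟩ ⟨i, b⟩) * jordanBlock (msz i) (lam i)) := by
  classical
  set J : Matrix (Σ i, Fin (msz i)) (Σ i, Fin (msz i)) ℝ :=
    blockDiagonal' fun i => jordanBlock (msz i) (lam i) with hJdef
  set L : ℝ → Matrix (Σ i, Fin (msz i)) (Σ i, Fin (msz i)) ℝ :=
    fun t => exp ((-t) • J) * Q * exp (t • J) with hLdef
  have hLentry : ∀ (t : ℝ) (i j : Fin s) (a : Fin (msz i)) (b : Fin (msz j)),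
      L t ⟨i, a⟩ ⟨j, b⟩ = Real.exp ((lam j - lam i) * t) *
        ((S (msz i) (-t) * (Matrix.of fun a b => Q ⟨i, a⟩ ⟨j, b⟩) * S (msz j) t) a b) :=
    fun t i j a b => entry_S Q t ⟨i, a⟩ ⟨j, b⟩
  have hLraw : ∀ (t : ℝ) (i j : Fin s) (a : Fin (msz i)) (b : Fin (msz j)),
      L t ⟨i, a⟩ ⟨j, b⟩ = (exp ((-t) • jordanBlock (msz i) (lam i)) *
          (Matrix.of fun a b => Q ⟨i, a⟩ ⟨j, b⟩) * exp (t • jordanBlock (msz j) (lam j))) a b :=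
    fun t i j a b => entry_raw Q t ⟨i, a⟩ ⟨j, b⟩
  have hblockdet : ∀ k : Fin s,
      (Q.toSquareBlock Sigma.fst k).det
        = (Matrix.of fun a b => Q ⟨k, a⟩ ⟨k, b⟩ : Matrix (Fin (msz k)) (Fin (msz k)) ℝ).det := by
    intro k
    rw [← Matrix.det_submatrix_equiv_self (blockEquiv k) (Q.toSquareBlock Sigma.fst k)]
    rfl
  constructor
  · rintro ⟨-, ⟨M, hM⟩, ⟨η, hηpos, hdet⟩⟩
    have hent : ∀ t : ℝ, 0 ≤ t → ∀ x y : Σ i, Fin (msz i), |L t x y| ≤ M := fun t ht x y =>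
      le_trans (frob_entry_le (L t) x y) (hM t ht)
    have hupper : ∀ i j : Fin s, j < i → ∀ (a : Fin (msz i)) (b : Fin (msz j)),
        Q ⟨i, a⟩ ⟨j, b⟩ = 0 := by
      intro i j hij a b
      obtain ⟨r, hr⟩ := poly_rep (p := msz i) (q := msz j)
        (Matrix.of fun a b => Q ⟨i, a⟩ ⟨j, b⟩) a b
      have hc : 0 < lam j - lam i := sub_pos.mpr (hlam j i hij)
      have hr0 : r = 0 := by
        refine exp_growth_zero hc (M := M) (fun t ht => ?_)
        have h1 := hent t ht ⟨i, a⟩ ⟨j, b⟩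
        rwa [hLentry, hr] at h1
      have h2 := hr 0
      rw [neg_zero, S_zero, S_zero, Matrix.one_mul, Matrix.mul_one, hr0] at h2
      simpa using h2
    refine ⟨hupper, fun i => ?_⟩
    have hQdet : Q.det ≠ 0 := by
      have h0 := hdet 0 (self_mem_Ici)
      have hL0 : L 0 = Q := by
        show exp ((-(0:ℝ)) • J) * Q * exp ((0:ℝ) • J) = Q
        simp only [neg_zero, zero_smul, NormedSpace.exp_zero, one_mul, mul_one]
      rw [hL0] at h0
      intro h
      rw [h] at h0
      simp only [abs_zero] at h0
      linarith
    have hBT : Q.BlockTriangular Sigma.fst := by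
      rintro ⟨i, a⟩ ⟨j, b⟩ h
      exact hupper i j h a b
    have hprod : Q.det = ∏ k : Fin s, (Q.toSquareBlock Sigma.fst k).det := hBT.det_fintype
    have hblk : (Matrix.of fun a b => Q ⟨i, a⟩ ⟨i, b⟩ :
        Matrix (Fin (msz i)) (Fin (msz i)) ℝ).det ≠ 0 := by
      rw [← hblockdet i]
      intro h
      apply hQdet
      rw [hprod]
      exact Finset.prod_eq_zero (Finset.mem_univ i) h
    refine ⟨(Matrix.isUnit_iff_isUnit_det _).mpr (isUnit_iff_ne_zero.mpr hblk), ?_⟩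
    have hSconst : ∀ t : ℝ, S (msz i) (-t) * (Matrix.of fun a b => Q ⟨i, a⟩ ⟨i, b⟩) *
        S (msz i) t = (Matrix.of fun a b => Q ⟨i, a⟩ ⟨i, b⟩) := by
      intro t
      ext a b
      obtain ⟨r, hr⟩ := poly_rep (p := msz i) (q := msz i)
        (Matrix.of fun a b => Q ⟨i, a⟩ ⟨i, b⟩) a b
      have hbd : ∀ u : ℝ, 0 ≤ u → |r.eval u| ≤ M := by
        intro u hu
        have h1 := hent u hu ⟨i, a⟩ ⟨i, b⟩
        rw [hLentry, hr] at h1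
        simpa using h1
      have h2 := poly_bounded_const hbd t
      have h3 := hr 0
      rw [neg_zero, S_zero, Matrix.one_mul, Matrix.mul_one] at h3
      rw [hr t, h2, ← h3]
    have hconj : ∀ t : ℝ, exp ((-t) • jordanBlock (msz i) (lam i)) *
        (Matrix.of fun a b => Q ⟨i, a⟩ ⟨i, b⟩) * exp (t • jordanBlock (msz i) (lam i))
          = (Matrix.of fun a b => Q ⟨i, a⟩ ⟨i, b⟩) := by
      intro t
      rw [exp_jordan, exp_jordan, Matrix.smul_mul, Matrix.smul_mul, Matrix.mul_smul, smul_smul,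
        ← Real.exp_add, show -t * lam i + t * lam i = 0 by ring, Real.exp_zero, one_smul]
      exact hSconst t
    have hc2 : ∀ t : ℝ, (Matrix.of fun a b => Q ⟨i, a⟩ ⟨i, b⟩ :
        Matrix (Fin (msz i)) (Fin (msz i)) ℝ) * exp (t • jordanBlock (msz i) (lam i))
          = exp (t • jordanBlock (msz i) (lam i)) * (Matrix.of fun a b => Q ⟨i, a⟩ ⟨i, b⟩) := by
      intro t
      have h3 := congrArg (fun A => exp (t • jordanBlock (msz i) (lam i)) * A) (hconj t)
      beta_reduce at h3
      rw [← mul_assoc, ← mul_assoc, exp_mul_exp_neg, one_mul] at h3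
      exact h3
    exact commute_of_conj hc2
  · rintro ⟨hup, hdiag⟩
    refine ⟨?_, ?_, ?_⟩
    · have h1 : L = fun t : ℝ => exp (t • (-J)) * Q * exp (t • J) := by
        funext t
        show exp ((-t) • J) * Q * exp (t • J) = exp (t • (-J)) * Q * exp (t • J)
        rw [neg_smul, smul_neg]
      rw [h1]
      exact (contDiff_L (-J) J Q).contDiffOn
    · have hent : ∀ x y : Σ i, Fin (msz i), ∃ B : ℝ, ∀ t : ℝ, 0 ≤ t → |L t x y| ≤ B := by
        rintro ⟨i, a⟩ ⟨j, b⟩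
        rcases lt_trichotomy i j with hij | hij | hij
        · obtain ⟨r, hr⟩ := poly_rep (p := msz i) (q := msz j)
            (Matrix.of fun a b => Q ⟨i, a⟩ ⟨j, b⟩) a b
          have hc : lam j - lam i < 0 := sub_neg.mpr (hlam i j hij)
          obtain ⟨B, hB⟩ := exp_decay_mul_poly_bounded hc r
          refine ⟨B, fun t ht => ?_⟩
          rw [hLentry, hr]
          exact hB t ht
        · subst hij
          refine ⟨|Q ⟨i, a⟩ ⟨i, b⟩|, fun t ht => ?_⟩
          have hcomm : Commute (jordanBlock (msz i) (lam i))
              (Matrix.of fun a b => Q ⟨i, a⟩ ⟨i, b⟩ :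
                Matrix (Fin (msz i)) (Fin (msz i)) ℝ) := (hdiag i).2
          rw [hLraw, exp_conj_of_commute _ _ hcomm]
          exact le_refl _
        · refine ⟨0, fun t ht => ?_⟩
          have hz : (Matrix.of fun a b => Q ⟨i, a⟩ ⟨j, b⟩ :
              Matrix (Fin (msz i)) (Fin (msz j)) ℝ) = 0 := by
            ext a' b'
            exact hup i j hij a' b'
          rw [hLraw, hz, Matrix.mul_zero, Matrix.zero_mul]
          simp
      choose B hB using hent
      refine ⟨(∑ x, ∑ y, (B x y)^(2:ℕ)) ^ ((1:ℝ)/2), fun t ht => ?_⟩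
      exact norm_le_of_entries (L t) B (fun x y => hB x y t ht)
    · have hdetL : ∀ t : ℝ, (L t).det = Q.det := by
        intro t
        have h1 : (exp ((-t) • J)).det * (exp (t • J)).det = 1 := by
          rw [← Matrix.det_mul, exp_neg_mul_exp, Matrix.det_one]
        show (exp ((-t) • J) * Q * exp (t • J)).det = Q.det
        simp only [Matrix.det_mul]
        rw [mul_right_comm, h1, one_mul]
      have hQdet : Q.det ≠ 0 := by
        have hBT : Q.BlockTriangular Sigma.fst := by
          rintro ⟨i, a⟩ ⟨j, b⟩ h
          exact hup i j h a b
        rw [hBT.det_fintype]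
        apply Finset.prod_ne_zero_iff.mpr
        intro k _
        rw [hblockdet k]
        exact fun h => (isUnit_iff_ne_zero.mp
          ((Matrix.isUnit_iff_isUnit_det _).mp (hdiag k).1)) h
      refine ⟨|Q.det|, abs_pos.mpr hQdet, fun t ht => ?_⟩
      rw [hdetL t]
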